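/- Let a ≥ 0 and b ≥ 0 be real numbers. Then lim_{n→∞} (∑_{r=1}^n r^{ab+a+b}) / (∑_{r=1}^n r^a · (1^a + 2^a + … + r^a)^b) = (a+1)^b. -/

import Mathlib

open Filter Finset Asymptotics Topology

private lemma icc_sum_eq (u : ℕ → ℝ) (n : ℕ) :
    ∑ r ∈ Finset.Icc 1 n, u r = ∑ i ∈ Finset.range n, u (1 + i) := by
  rw [← Finset.Ico_add_one_right_eq_Icc, Finset.sum_Ico_eq_sum_range]
  simp

/-- Stolz–Cesàro style lemma for ratios of sums. -/
private lemma sum_ratio_tendsto (u v : ℕ → ℝ) (L : ℝ)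
    (hv : ∀ n : ℕ, 1 ≤ n → 1 ≤ v n)
    (h : Tendsto (fun n => u n / v n) atTop (𝓝 L)) :
    Tendsto (fun n : ℕ => (∑ r ∈ Finset.Icc 1 n, u r) / (∑ r ∈ Finset.Icc 1 n, v r))
      atTop (𝓝 L) := by
  set f : ℕ → ℝ := fun i => u (1 + i) - L * v (1 + i) with hf
  set g : ℕ → ℝ := fun i => v (1 + i) with hgdef
  have hg1 : ∀ i, 1 ≤ g i := fun i => hv _ (Nat.le_add_right 1 i)
  have hg0 : (0 : ℕ → ℝ) ≤ g := fun i => le_trans zero_le_one (hg1 i)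
  have hgpos : ∀ i, (0:ℝ) < g i := fun i => lt_of_lt_of_le zero_lt_one (hg1 i)
  have hG : ∀ n : ℕ, (n : ℝ) ≤ ∑ i ∈ range n, g i := by
    intro n
    calc (n:ℝ) = ∑ _i ∈ range n, (1:ℝ) := by simp
    _ ≤ _ := Finset.sum_le_sum (fun i _ => hg1 i)
  have hGtop : Tendsto (fun n => ∑ i ∈ range n, g i) atTop atTop :=
    tendsto_atTop_mono hG tendsto_natCast_atTop_atTop
  have hshift : Tendsto (fun n : ℕ => u (1 + n) / v (1 + n)) atTop (𝓝 L) := by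
    have := h.comp (tendsto_add_atTop_nat 1)
    simpa [Function.comp_def, Nat.add_comm] using this
  have fog : f =o[atTop] g := by
    rw [isLittleO_iff_tendsto' (by
      filter_upwards with i hi
      exact absurd hi (hgpos i).ne')]
    have : Tendsto (fun i : ℕ => u (1 + i) / v (1 + i) - L) atTop (𝓝 (L - L)) :=
      hshift.sub_const L
    rw [sub_self] at this
    apply this.congr
    intro i
    have hvi : v (1 + i) ≠ 0 := (hgpos i).ne'
    show _ = (u (1 + i) - L * v (1 + i)) / v (1 + i)
    rw [sub_div, mul_div_assoc, div_self hvi, mul_one]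
  have hsum := fog.sum_range hg0 hGtop
  have hFG : Tendsto
      (fun n => (∑ i ∈ range n, f i) / (∑ i ∈ range n, g i)) atTop (𝓝 0) := by
    rw [← isLittleO_iff_tendsto']
    · exact hsum
    · filter_upwards [eventually_ge_atTop 1] with n hn hzero
      exfalso
      have := hG n
      rw [hzero] at this
      have : (1:ℝ) ≤ 0 := le_trans (by exact_mod_cast hn) this
      linarith
  have key : Tendsto
      (fun n => (∑ i ∈ range n, u (1 + i)) / (∑ i ∈ range n, g i)) atTop (𝓝 L) := by
    have := hFG.add_const L
    rw [zero_add] at this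
    apply this.congr'
    filter_upwards [eventually_ge_atTop 1] with n hn
    have hGpos : (0:ℝ) < ∑ i ∈ range n, g i :=
      lt_of_lt_of_le (by exact_mod_cast hn : (0:ℝ) < (n:ℝ)) (hG n)
    have : ∑ i ∈ range n, f i = (∑ i ∈ range n, u (1 + i)) - L * ∑ i ∈ range n, g i := by
      rw [hf, Finset.sum_sub_distrib, Finset.mul_sum]
    rw [this, sub_div, mul_div_assoc, div_self hGpos.ne', mul_one]
    ring
  apply key.congr
  intro n
  rw [icc_sum_eq u n, icc_sum_eq v n]

private lemma sum_rpow_div_tendsto (a : ℝ) (ha : 0 ≤ a) :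
    Tendsto (fun n : ℕ => (∑ i ∈ Finset.Icc 1 n, (i:ℝ) ^ a) / (n:ℝ) ^ (a + 1))
      atTop (𝓝 (1 / (a + 1))) := by
  have ha1 : (0:ℝ) < a + 1 := by linarith
  have hmono : ∀ c : ℝ, 0 ≤ c → ∀ m : ℕ,
      MonotoneOn (fun x : ℝ => x ^ a) (Set.Icc c (c + m)) := by
    intro c hc m x hx y hy hxy
    exact Real.rpow_le_rpow (le_trans hc hx.1) hxy ha
  -- lower bound : n^(a+1)/(a+1) ≤ S n
  have hlow : ∀ n : ℕ, (n:ℝ) ^ (a+1) / (a+1) ≤ ∑ i ∈ Finset.Icc 1 n, (i:ℝ) ^ a := by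
    intro n
    have h1 := (hmono 0 le_rfl n).integral_le_sum
    rw [zero_add, integral_rpow (Or.inl (by linarith : (-1:ℝ) < a)),
      Real.zero_rpow ha1.ne', sub_zero] at h1
    refine le_trans h1 (le_of_eq ?_)
    rw [icc_sum_eq (fun i => (i:ℝ) ^ a) n]
    apply Finset.sum_congr rfl
    intro i _
    norm_num [Nat.add_comm]
  -- upper bound : S n ≤ (n+1)^(a+1)/(a+1)
  have hup : ∀ n : ℕ, (∑ i ∈ Finset.Icc 1 n, (i:ℝ) ^ a) ≤ ((n:ℝ)+1) ^ (a+1) / (a+1) := by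
    intro n
    have h1 := (hmono 1 zero_le_one n).sum_le_integral
    rw [integral_rpow (Or.inl (by linarith : (-1:ℝ) < a)), Real.one_rpow] at h1
    have h2 : (∑ i ∈ Finset.Icc 1 n, (i:ℝ) ^ a) ≤ ((1 + (n:ℝ)) ^ (a+1) - 1) / (a + 1) := by
      refine le_trans (le_of_eq ?_) h1
      rw [icc_sum_eq (fun i => (i:ℝ) ^ a) n]
      apply Finset.sum_congr rfl
      intro i _
      push_cast
      ring_nf
    refine le_trans h2 ?_
    rw [add_comm (1:ℝ) (n:ℝ)]
    exact div_le_div_of_nonneg_right (sub_le_self _ zero_le_one) ha1.le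
  -- squeeze
  have hlim : Tendsto (fun n : ℕ => ((n:ℝ)+1) ^ (a+1) / ((a+1) * (n:ℝ) ^ (a+1)))
      atTop (𝓝 (1 / (a+1))) := by
    have h1 : Tendsto (fun n : ℕ => (1 + 1/(n:ℝ))) atTop (𝓝 1) := by
      have := tendsto_one_div_atTop_nhds_zero_nat (𝕜 := ℝ)
      simpa using (tendsto_const_nhds (x := (1:ℝ))).add this
    have h2 : Tendsto (fun n : ℕ => (1 + 1/(n:ℝ)) ^ (a+1)) atTop (𝓝 1) := by
      have := h1.rpow_const (p := a + 1) (Or.inr ha1.le)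
      simpa using this
    have h3 : Tendsto (fun n : ℕ => (1 + 1/(n:ℝ)) ^ (a+1) / (a+1)) atTop (𝓝 (1/(a+1))) :=
      h2.div_const (a+1)
    apply h3.congr'
    filter_upwards [eventually_ge_atTop 1] with n hn
    have hn0 : (0:ℝ) < (n:ℝ) := by exact_mod_cast hn
    have hnp : (0:ℝ) < (n:ℝ) ^ (a+1) := Real.rpow_pos_of_pos hn0 _
    have e1 : (1:ℝ) + 1/(n:ℝ) = ((n:ℝ)+1)/(n:ℝ) := by field_simp
    rw [e1, Real.div_rpow (by positivity) hn0.le, div_div, mul_comm ((n:ℝ)^(a+1)) (a+1)]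
  refine tendsto_of_tendsto_of_tendsto_of_le_of_le'
    (tendsto_const_nhds) hlim ?_ ?_
  · filter_upwards [eventually_ge_atTop 1] with n hn
    have hn0 : (0:ℝ) < (n:ℝ) := by exact_mod_cast hn
    have hnp : (0:ℝ) < (n:ℝ) ^ (a+1) := Real.rpow_pos_of_pos hn0 _
    rw [div_le_div_iff₀ ha1 hnp]
    have := (div_le_iff₀ ha1).mp (hlow n)
    linarith
  · filter_upwards [eventually_ge_atTop 1] with n hn
    have hn0 : (0:ℝ) < (n:ℝ) := by exact_mod_cast hn
    have hnp : (0:ℝ) < (n:ℝ) ^ (a+1) := Real.rpow_pos_of_pos hn0 _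
    rw [div_le_div_iff₀ hnp (by positivity)]
    calc (∑ i ∈ Finset.Icc 1 n, (i:ℝ) ^ a) * ((a+1) * (n:ℝ) ^ (a+1))
        ≤ (((n:ℝ)+1) ^ (a+1) / (a+1)) * ((a+1) * (n:ℝ) ^ (a+1)) := by
          apply mul_le_mul_of_nonneg_right (hup n) (by positivity)
    _ = ((n:ℝ)+1) ^ (a+1) * (n:ℝ) ^ (a+1) := by field_simp

/-- For `a ≥ 0`, `b ≥ 0`,
`(∑_{r=1}^n r^(ab+a+b)) / (∑_{r=1}^n r^a (1^a + … + r^a)^b) → (a+1)^b`. -/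
theorem ratio_of_power_sums_tendsto
    (a b : ℝ) (ha : 0 ≤ a) (hb : 0 ≤ b) :
    Tendsto (fun n : ℕ =>
        (∑ r ∈ Finset.Icc 1 n, (r : ℝ) ^ (a * b + a + b)) /
          (∑ r ∈ Finset.Icc 1 n,
            (r : ℝ) ^ a * (∑ i ∈ Finset.Icc 1 r, (i : ℝ) ^ a) ^ b))
      atTop (nhds ((a + 1) ^ b)) := by
  have ha1 : (0:ℝ) < a + 1 := by linarith
  set S : ℕ → ℝ := fun r => ∑ i ∈ Finset.Icc 1 r, (i:ℝ) ^ a with hS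
  have hSpos : ∀ r : ℕ, 1 ≤ r → 1 ≤ S r := by
    intro r hr
    have h1 : (1:ℕ) ∈ Finset.Icc 1 r := by simp [hr]
    calc (1:ℝ) = ((1:ℕ):ℝ) ^ a := by norm_num
    _ ≤ S r := Finset.single_le_sum (fun i _ => Real.rpow_nonneg (Nat.cast_nonneg i) a) h1
  apply sum_ratio_tendsto
  · intro n hn
    have h1 : (1:ℝ) ≤ (n:ℝ) ^ a :=
      Real.one_le_rpow (by exact_mod_cast hn) ha
    have h2 : (1:ℝ) ≤ (S n) ^ b :=
      Real.one_le_rpow (hSpos n hn) hb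
    calc (1:ℝ) = 1 * 1 := by ring
    _ ≤ (n:ℝ) ^ a * (S n) ^ b := mul_le_mul h1 h2 zero_le_one (by positivity)
  · -- u n / v n → (a+1)^b
    have hinv : Tendsto (fun n : ℕ => (n:ℝ) ^ (a+1) / S n) atTop (𝓝 (a+1)) := by
      have h1 := (sum_rpow_div_tendsto a ha).inv₀ (by positivity)
      have : (1 / (a+1) : ℝ)⁻¹ = a + 1 := by field_simp
      rw [this] at h1
      apply h1.congr'
      filter_upwards [eventually_ge_atTop 1] with n hn
      have hn0 : (0:ℝ) < (n:ℝ) := by exact_mod_cast hn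
      rw [inv_div]
    have h2 : Tendsto (fun n : ℕ => ((n:ℝ) ^ (a+1) / S n) ^ b) atTop (𝓝 ((a+1) ^ b)) :=
      hinv.rpow_const (Or.inr hb)
    apply h2.congr'
    filter_upwards [eventually_ge_atTop 1] with n hn
    have hn0 : (0:ℝ) < (n:ℝ) := by exact_mod_cast hn
    have hSn : (0:ℝ) < S n := lt_of_lt_of_le zero_lt_one (hSpos n hn)
    show ((n:ℝ)^(a+1) / S n) ^ b = _
    rw [Real.div_rpow (by positivity) hSn.le, ← Real.rpow_mul hn0.le]
    have e2 : (n:ℝ)^(a*b+a+b) = (n:ℝ)^a * (n:ℝ)^((a+1)*b) := by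
      rw [← Real.rpow_add hn0]; ring_nf
    show _ = (n:ℝ)^(a*b+a+b) / ((n:ℝ)^a * (S n)^b)
    rw [e2, mul_div_mul_left _ _ (ne_of_gt (Real.rpow_pos_of_pos hn0 a))]
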